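/- arXiv:2211.12430 — 2 statements merged into one kernel-verified Lean document; each statement's English description precedes it below -/
import Mathlib

section
/- Let $a,c \in \mathbb{C}$, $a \neq 0$, $\beta = (5+2\sqrt{5})/4$, and suppose $|c| > \beta(1+|a|)^2$. Set $\delta = (1+|a|)/2$. Then there exists $R$ with $R_1 < R < |c|/(1+|a|)$ (where $R_1 = \frac{1+|a|+\sqrt{(1+|a|)^2+4|c|}}{2}$) such that for all $x,y \in \mathbb{C}$ with $|x| \le \delta$ and $|y| \le R$ one has $|x^2 + c - ay| > R$. -/
lemma stmt1_aux (A C : ℝ) (hA1 : 1 < A)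
    (hC : C > (5 + 2 * Real.sqrt 5) / 4 * A ^ 2) :
    ∃ R : ℝ, (A + Real.sqrt (A ^ 2 + 4 * C)) / 2 < R ∧ R < C / A ∧
      0 < R ∧ C - A ^ 2 / 4 - (A - 1) * R > R := by
  have hA0 : 0 < A := by linarith
  have hr2 : (Real.sqrt 5) ^ 2 = 5 := Real.sq_sqrt (by norm_num)
  have hr1 : 2 ≤ Real.sqrt 5 := by nlinarith [Real.sqrt_nonneg 5]
  have hC0 : 0 < C := by nlinarith [sq_nonneg A]
  set s : ℝ := Real.sqrt (A ^ 2 + 4 * C) with hsdef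
  have hs0 : 0 ≤ s := Real.sqrt_nonneg _
  have hs2 : s ^ 2 = A ^ 2 + 4 * C := Real.sq_sqrt (by positivity)
  have key : A * s < 2 * C - 3 * A ^ 2 / 2 := by
    have h1 : 0 < 2 * C - 3 * A ^ 2 / 2 := by nlinarith
    have hP : (C - (5 + 2 * Real.sqrt 5) / 4 * A ^ 2) * (C - (5 - 2 * Real.sqrt 5) / 4 * A ^ 2)
        = C ^ 2 - 5 / 2 * A ^ 2 * C + 5 / 16 * A ^ 4 := by
      linear_combination (-(A ^ 4) / 4) * hr2
    have hP2 : 0 < C - (5 - 2 * Real.sqrt 5) / 4 * A ^ 2 := by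
      nlinarith [mul_nonneg (by linarith : (0:ℝ) ≤ Real.sqrt 5) (sq_nonneg A)]
    have hP0 : 0 < (C - (5 + 2 * Real.sqrt 5) / 4 * A ^ 2) * (C - (5 - 2 * Real.sqrt 5) / 4 * A ^ 2) :=
      mul_pos (by linarith) hP2
    have hq : 4 * C ^ 2 - 10 * A ^ 2 * C + 5 * A ^ 4 / 4 > 0 := by
      rw [hP] at hP0; linarith
    have h2 : (A * s) ^ 2 < (2 * C - 3 * A ^ 2 / 2) ^ 2 := by
      calc (A * s) ^ 2 = A ^ 2 * (A ^ 2 + 4 * C) := by rw [mul_pow, hs2]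
        _ < (2 * C - 3 * A ^ 2 / 2) ^ 2 := by nlinarith
    exact lt_of_pow_lt_pow_left₀ 2 h1.le h2
  have hMA : (C - A ^ 2 / 4) / A * A = C - A ^ 2 / 4 := by field_simp
  set M : ℝ := (C - A ^ 2 / 4) / A with hMdef
  have hR1M : (A + s) / 2 < M := by
    rw [hMdef, div_lt_div_iff₀ two_pos hA0]
    nlinarith
  have hMC : M < C / A := by
    rw [hMdef, div_lt_div_iff₀ hA0 hA0]
    nlinarith [sq_nonneg A]
  refine ⟨((A + s) / 2 + M) / 2, by linarith, by linarith, ?_, ?_⟩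
  · nlinarith
  · have hRM : ((A + s) / 2 + M) / 2 < M := by linarith
    nlinarith [mul_lt_mul_of_pos_right hRM hA0]

theorem stmt1 (a c : ℂ) (ha : a ≠ 0)
    (hc : ‖c‖ > (5 + 2 * Real.sqrt 5) / 4 * (1 + ‖a‖) ^ 2) :
    ∃ R : ℝ,
      (1 + ‖a‖ + Real.sqrt ((1 + ‖a‖) ^ 2 + 4 * ‖c‖)) / 2 < R ∧
      R < ‖c‖ / (1 + ‖a‖) ∧
      ∀ x y : ℂ, ‖x‖ ≤ (1 + ‖a‖) / 2 → ‖y‖ ≤ R →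
        ‖x ^ 2 + c - a * y‖ > R := by
  have ha' : 0 < ‖a‖ := norm_pos_iff.mpr ha
  obtain ⟨R, h1, h2, hR0, h3⟩ := stmt1_aux (1 + ‖a‖) (‖c‖) (by linarith) hc
  refine ⟨R, h1, h2, ?_⟩
  intro x y hx hy
  have tri : ‖c‖ ≤ ‖x ^ 2 + c - a * y‖ + (‖x‖) ^ 2
      + ‖a‖ * ‖y‖ := by
    have hceq : ‖c‖ = ‖(x ^ 2 + c - a * y) + (-(x ^ 2)) + a * y‖ := by
      congr 1; ring
    rw [hceq]
    calc ‖(x ^ 2 + c - a * y) + (-(x ^ 2)) + a * y‖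
        ≤ ‖(x ^ 2 + c - a * y) + (-(x ^ 2))‖ + ‖a * y‖ :=
          norm_add_le _ _
      _ ≤ ‖x ^ 2 + c - a * y‖ + ‖x ^ 2‖ + ‖a * y‖ := by
          have h4 := norm_add_le (x ^ 2 + c - a * y) (-(x ^ 2))
          rw [norm_neg] at h4
          linarith
      _ = ‖x ^ 2 + c - a * y‖ + (‖x‖) ^ 2
          + ‖a‖ * ‖y‖ := by rw [norm_pow, norm_mul]
  have hx2 : (‖x‖) ^ 2 ≤ (1 + ‖a‖) ^ 2 / 4 := by
    nlinarith [norm_nonneg x]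
  have hay : ‖a‖ * ‖y‖ ≤ ‖a‖ * R :=
    mul_le_mul_of_nonneg_left hy ha'.le
  have := h3
  linarith
end

section
/- Let $0<\gamma_2<\gamma_1<1$ and $\beta = \frac{2(\gamma_1^2+\gamma_2^2)}{(\gamma_1^2-\gamma_2^2)^2}$, and let $a, c \in \mathbb{C}$ with $|c| > \beta(1+|a|)^2$. Then with $c_0 = 4|c|/(1+|a|)^2$ we have $c_0 > \frac{8(\gamma_1^2+\gamma_2^2)}{(\gamma_1^2-\gamma_2^2)^2}$ and consequently $2\sqrt{1+c_0\gamma_1^2}\sqrt{1+c_0\gamma_2^2} \le c_0(\gamma_1^2+\gamma_2^2) - 2$. -/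
theorem stmt16 (γ₁ γ₂ : ℝ) (h2 : 0 < γ₂) (h21 : γ₂ < γ₁) (h1 : γ₁ < 1)
    (a c : ℂ)
    (hc : ‖c‖ > 2 * (γ₁ ^ 2 + γ₂ ^ 2) / (γ₁ ^ 2 - γ₂ ^ 2) ^ 2 * (1 + ‖a‖) ^ 2) :
    4 * ‖c‖ / (1 + ‖a‖) ^ 2 >
      8 * (γ₁ ^ 2 + γ₂ ^ 2) / (γ₁ ^ 2 - γ₂ ^ 2) ^ 2 ∧
    2 * Real.sqrt (1 + 4 * ‖c‖ / (1 + ‖a‖) ^ 2 * γ₁ ^ 2) *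
        Real.sqrt (1 + 4 * ‖c‖ / (1 + ‖a‖) ^ 2 * γ₂ ^ 2) ≤
      4 * ‖c‖ / (1 + ‖a‖) ^ 2 * (γ₁ ^ 2 + γ₂ ^ 2) - 2 := by
  have ha : (0:ℝ) < 1 + ‖a‖ := by positivity
  have hD : (0:ℝ) < (γ₁ ^ 2 - γ₂ ^ 2) ^ 2 := pow_pos (by nlinarith) 2
  have hS : (0:ℝ) < γ₁ ^ 2 + γ₂ ^ 2 := by positivity
  set x := 4 * ‖c‖ / (1 + ‖a‖) ^ 2 with hxdef
  have hx8 : x > 8 * (γ₁ ^ 2 + γ₂ ^ 2) / (γ₁ ^ 2 - γ₂ ^ 2) ^ 2 := by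
    rw [div_mul_eq_mul_div, gt_iff_lt, div_lt_iff₀ hD] at hc
    rw [hxdef, gt_iff_lt, div_lt_div_iff₀ hD (by positivity)]
    nlinarith
  refine ⟨hx8, ?_⟩
  have hxD : x * (γ₁ ^ 2 - γ₂ ^ 2) ^ 2 > 8 * (γ₁ ^ 2 + γ₂ ^ 2) := by
    rw [gt_iff_lt, ← div_lt_iff₀ hD]; exact hx8
  have hDS : (γ₁ ^ 2 - γ₂ ^ 2) ^ 2 ≤ (γ₁ ^ 2 + γ₂ ^ 2) ^ 2 := by nlinarith
  have hxpos : 0 < x := by nlinarith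
  have hxS : x * (γ₁ ^ 2 + γ₂ ^ 2) ≥ 8 := by nlinarith
  have hA : (0:ℝ) ≤ 1 + x * γ₁ ^ 2 := by positivity
  have hB : (0:ℝ) ≤ 1 + x * γ₂ ^ 2 := by positivity
  have key : 4 * ((1 + x * γ₁ ^ 2) * (1 + x * γ₂ ^ 2)) ≤ (x * (γ₁ ^ 2 + γ₂ ^ 2) - 2) ^ 2 := by
    nlinarith [mul_le_mul_of_nonneg_left (le_of_lt hxD) (le_of_lt hxpos)]
  calc 2 * Real.sqrt (1 + x * γ₁ ^ 2) * Real.sqrt (1 + x * γ₂ ^ 2)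
      = Real.sqrt (4 * ((1 + x * γ₁ ^ 2) * (1 + x * γ₂ ^ 2))) := by
        rw [Real.sqrt_mul (by norm_num), Real.sqrt_mul hA, show Real.sqrt 4 = 2 by
          rw [show (4:ℝ) = 2 ^ 2 by norm_num, Real.sqrt_sq (by norm_num)]]
        ring
    _ ≤ Real.sqrt ((x * (γ₁ ^ 2 + γ₂ ^ 2) - 2) ^ 2) := Real.sqrt_le_sqrt key
    _ = x * (γ₁ ^ 2 + γ₂ ^ 2) - 2 := Real.sqrt_sq (by linarith)
end
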